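/- arXiv:2402.14271 — 3 statements merged into one kernel-verified Lean document; each statement's English description precedes it below -/
import Mathlib

section
/- Let (s_n) be positive reals with s_n → 0 and lim_{n→∞} s_n^{1/n} = L/K where 1 < L < K. Then there exists a constant C such that for all sufficiently large n, (s_{n-1} K^{n-1}) · ∑_{j=n}^{∞} 1/(s_j K^j) ≤ C; in particular one may take C = 2/ln K when additionally |g'(x)|/g(x) ≤ (1/2)·ln K for an interpolating C¹ function g with g(j) = 1/s_j. -/
theorem stmt_8 (s : ℕ → ℝ) (hs : ∀ n, 0 < s n) (K L : ℝ) (hL : 1 < L) (hLK : L < K)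
    (hs0 : Filter.Tendsto s Filter.atTop (nhds 0))
    (hroot : Filter.Tendsto (fun n : ℕ => (s n) ^ ((1 : ℝ) / n))
      Filter.atTop (nhds (L / K)))
    (g : ℝ → ℝ) (hg : ContDiff ℝ 1 g) (hgpos : ∀ x > (0 : ℝ), 0 < g x)
    (hgj : ∀ j : ℕ, 1 ≤ j → g j = 1 / s j)
    (hgmono : Filter.Tendsto g Filter.atTop Filter.atTop)
    (hgK : Filter.Tendsto (fun x : ℝ => (g x) ^ (1 / x)) Filter.atTop (nhds (K / L)))
    (hgd : ∀ᶠ x : ℝ in Filter.atTop, |deriv g x| / g x ≤ (1 / 2) * Real.log K) :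
    ∀ᶠ n : ℕ in Filter.atTop,
      s (n - 1) * K ^ (n - 1) * (∑' j : ℕ, 1 / (s (n + j) * K ^ (n + j))) ≤
        2 / Real.log K := by
  have hK : 1 < K := hL.trans hLK
  have hK0 : (0:ℝ) < K := by linarith
  have hlogK : 0 < Real.log K := Real.log_pos hK
  have hsq : Real.sqrt K * Real.sqrt K = K := Real.mul_self_sqrt hK0.le
  have hsK : 1 < Real.sqrt K := by
    have := Real.sqrt_lt_sqrt (by norm_num : (0:ℝ) ≤ 1) hK
    simpa using this
  have hsK0 : 0 < Real.sqrt K := by linarith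
  rw [Filter.eventually_atTop] at hgd
  obtain ⟨N₀, hN₀⟩ := hgd
  set M := max N₀ 1 with hM
  have hM1 : (1:ℝ) ≤ M := le_max_right _ _
  -- key integrated log-derivative bound
  have key : ∀ x y : ℝ, M ≤ y → y ≤ x →
      g x ≤ g y * Real.exp ((1/2) * Real.log K * (x - y)) := by
    intro x y hMy hyx
    have hpos : ∀ t ∈ Set.Icc y x, 0 < g t := by
      intro t ht
      exact hgpos t (by linarith [ht.1])
    have hdiff : ∀ t : ℝ, HasDerivAt g (deriv g t) t :=
      fun t => (hg.differentiable one_ne_zero t).hasDerivAt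
    have hlogd : ∀ t ∈ Set.Icc y x,
        HasDerivWithinAt (fun u => Real.log (g u)) (deriv g t / g t) (Set.Icc y x) t :=
      fun t ht => (((hdiff t).log (hpos t ht).ne')).hasDerivWithinAt
    have hbound : ∀ t ∈ Set.Icc y x, ‖deriv g t / g t‖ ≤ (1/2) * Real.log K := by
      intro t ht
      have ht0 : 0 < g t := hpos t ht
      have hN : N₀ ≤ t := le_trans (le_trans (le_max_left _ _) hMy) ht.1
      have h := hN₀ t hN
      rw [Real.norm_eq_abs, abs_div, abs_of_pos ht0]
      exact h
    have hmem_y : y ∈ Set.Icc y x := ⟨le_rfl, hyx⟩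
    have hmem_x : x ∈ Set.Icc y x := ⟨hyx, le_rfl⟩
    have hmvt := (convex_Icc y x).norm_image_sub_le_of_norm_hasDerivWithin_le
      hlogd hbound hmem_y hmem_x
    have h1 : Real.log (g x) - Real.log (g y) ≤ (1/2) * Real.log K * (x - y) := by
      have h2 : |Real.log (g x) - Real.log (g y)| ≤ (1/2) * Real.log K * (x - y) := by
        simpa [Real.norm_eq_abs, abs_of_nonneg (sub_nonneg.mpr hyx)] using hmvt
      exact (abs_le.mp h2).2
    calc g x = Real.exp (Real.log (g x)) := (Real.exp_log (hpos x hmem_x)).symm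
      _ ≤ Real.exp (Real.log (g y) + (1/2) * Real.log K * (x - y)) :=
          Real.exp_le_exp.mpr (by linarith)
      _ = g y * Real.exp ((1/2) * Real.log K * (x - y)) := by
          rw [Real.exp_add, Real.exp_log (hpos y hmem_y)]
  set r : ℝ := (Real.sqrt K)⁻¹ with hr
  have hr0 : 0 < r := by positivity
  have hr1 : r < 1 := by
    rw [hr]
    rw [inv_lt_one_iff₀]
    right; exact hsK
  have h1r : 0 < 1 - r := by linarith
  have hexpc : Real.exp ((1/2) * Real.log K) = Real.sqrt K := by
    have : (1/2) * Real.log K = Real.log (Real.sqrt K) := by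
      rw [Real.log_sqrt hK0.le]; ring
    rw [this, Real.exp_log hsK0]
  have hrdiv : Real.sqrt K / K = r := by
    rw [hr, ← hsq]
    field_simp
    rw [Real.sqrt_sq hsK0.le]
  refine Filter.eventually_atTop.mpr ⟨⌈M⌉₊ + 2, fun n hn => ?_⟩
  set m := n - 1 with hmdef
  have hnm : n = m + 1 := by omega
  have hm1 : 1 ≤ m := by omega
  have hmM : M ≤ (m:ℝ) := by
    calc M ≤ (⌈M⌉₊:ℝ) := Nat.le_ceil M
      _ ≤ (m:ℝ) := by exact_mod_cast (by omega : ⌈M⌉₊ ≤ m)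
  have hm0 : (0:ℝ) < (m:ℝ) := by linarith
  have hgm : 0 < g m := hgpos _ hm0
  set A : ℝ := g m / K ^ m with hA
  have hA0 : 0 < A := by positivity
  have hterm : ∀ j : ℕ, 1 / (s (n+j) * K ^ (n+j)) ≤ A * r ^ (j+1) := by
    intro j
    have hnj1 : 1 ≤ n + j := by omega
    have hgnj : g ((n+j : ℕ) : ℝ) = 1 / s (n+j) := hgj _ hnj1
    have hsnj := hs (n+j)
    have h1 : (1:ℝ) / (s (n+j) * K ^ (n+j)) = g ((n+j:ℕ):ℝ) / K ^ (n+j) := by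
      rw [hgnj]; field_simp
    rw [h1]
    have hcast : ((n+j:ℕ):ℝ) - (m:ℝ) = (j:ℝ) + 1 := by
      rw [hnm]; push_cast; ring
    have hle : g ((n+j:ℕ):ℝ) ≤ g m * Real.exp ((1/2) * Real.log K * (((n+j:ℕ):ℝ) - m)) :=
      key _ _ hmM (by rw [hnm]; push_cast; linarith [Nat.cast_nonneg (α := ℝ) j])
    have hexp : Real.exp ((1/2) * Real.log K * (((n+j:ℕ):ℝ) - m)) =
        Real.sqrt K ^ (j+1) := by
      rw [hcast, mul_comm, show ((j:ℝ)+1) = ((j+1:ℕ):ℝ) by push_cast; ring,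
        Real.exp_nat_mul, hexpc]
    have hKpow : (K:ℝ) ^ (n+j) = K ^ m * K ^ (j+1) := by
      rw [show n + j = m + (j+1) by omega, pow_add]
    have hle2 : g ((n+j:ℕ):ℝ) ≤ g m * Real.sqrt K ^ (j+1) := by
      rw [← hexp]; exact hle
    calc g ((n+j:ℕ):ℝ) / K ^ (n+j)
        ≤ (g m * Real.sqrt K ^ (j+1)) / K ^ (n+j) := by
          apply div_le_div_of_nonneg_right hle2 (by positivity) |>.trans_eq rfl
      _ = A * r ^ (j+1) := by
          rw [hKpow, hA, ← hrdiv, div_pow]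
          field_simp
  have hgeo : Summable (fun j : ℕ => r ^ (j+1)) := by
    simpa [pow_succ] using (summable_geometric_of_lt_one hr0.le hr1).mul_right r
  have hsum_geo : Summable (fun j : ℕ => A * r ^ (j+1)) := hgeo.mul_left A
  have hpos_term : ∀ j : ℕ, 0 ≤ 1 / (s (n+j) * K ^ (n+j)) := by
    intro j
    have := hs (n+j)
    positivity
  have hsum : Summable (fun j : ℕ => 1 / (s (n+j) * K ^ (n+j))) :=
    Summable.of_nonneg_of_le hpos_term hterm hsum_geo
  have htsum : (∑' j : ℕ, 1 / (s (n+j) * K ^ (n+j))) ≤ ∑' j : ℕ, A * r ^ (j+1) :=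
    Summable.tsum_le_tsum hterm hsum hsum_geo
  have hts : (∑' j : ℕ, A * r ^ (j+1)) = A * ((1-r)⁻¹ * r) := by
    rw [tsum_mul_left]
    congr 1
    simp only [pow_succ]
    rw [tsum_mul_right, tsum_geometric_of_lt_one hr0.le hr1]
  have hsm : s m * g m = 1 := by
    rw [hgj m hm1]
    field_simp
    exact div_self (hs m).ne'
  have hsm0 := hs m
  have hKm : (0:ℝ) < K ^ m := by positivity
  have hfin : (1-r)⁻¹ * r ≤ 2 / Real.log K := by
    have heq : (1-r)⁻¹ * r = 1 / (Real.sqrt K - 1) := by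
      rw [hr]
      have h1 : Real.sqrt K - 1 ≠ 0 := by linarith
      field_simp
    rw [heq, div_le_div_iff₀ (by linarith) hlogK]
    have hlog2 : Real.log K = 2 * Real.log (Real.sqrt K) := by
      rw [Real.log_sqrt hK0.le]; ring
    have hls : Real.log (Real.sqrt K) ≤ Real.sqrt K - 1 :=
      Real.log_le_sub_one_of_pos hsK0
    nlinarith
  calc s m * K ^ m * (∑' j : ℕ, 1 / (s (n+j) * K ^ (n+j)))
      ≤ s m * K ^ m * (A * ((1-r)⁻¹ * r)) := by
        apply mul_le_mul_of_nonneg_left _ (by positivity)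
        rw [← hts]; exact htsum
    _ = (s m * g ↑m) * ((1-r)⁻¹ * r) := by
        rw [hA]
        field_simp
    _ = (1-r)⁻¹ * r := by rw [hsm, one_mul]
    _ ≤ 2 / Real.log K := hfin
end

section
/- Define h : ℕ → ℂ → ℂ by h n z = 2^n z for odd n and h n z = z/2^{n+3} for even n. Then the difference equation b_{n+1} = h n b_n does not have Hyers-Ulam stability: for every ε > 0 there is a sequence (a_n) with |a_{n+1} - h n a_n| ≤ ε such that every solution (b_n) of b_{n+1} = h n b_n satisfies sup_n |b_n - a_n| = ∞. -/
noncomputable def aSeq (h : ℕ → ℂ → ℂ) (ε : ℝ) : ℕ → ℂ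
  | 0 => 0
  | n + 1 => h n (aSeq h ε n) + ε

theorem stmt_16 (h : ℕ → ℂ → ℂ)
    (hh : ∀ n z, h n z = if Odd n then 2 ^ n * z else z / 2 ^ (n + 3)) :
    ∀ ε > (0 : ℝ), ∃ a : ℕ → ℂ,
      (∀ n ≥ 1, ‖a (n + 1) - h n (a n)‖ ≤ ε) ∧
        ∀ b : ℕ → ℂ, (∀ n ≥ 1, b (n + 1) = h n (b n)) →
          ¬ BddAbove (Set.range fun n : ℕ => ‖b n - a n‖) := by
  intro ε hε
  set a := aSeq h ε with ha
  refine ⟨a, ?_, ?_⟩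
  · intro n _
    have : a (n + 1) = h n (a n) + ε := rfl
    rw [this]
    simp [abs_of_pos hε]
  · intro b hb hB
    obtain ⟨M, hM⟩ := hB
    have hM' : ∀ n, ‖b n - a n‖ ≤ M := fun n =>
      hM ⟨n, rfl⟩
    have hM0 : 0 ≤ M := le_trans (norm_nonneg _) (hM' 0)
    -- key two-step estimate at even n = 2k, k ≥ 1
    have key : ∀ k : ℕ, 1 ≤ k →
        ((2 : ℝ) ^ (2 * k + 1) + 1) * ε ≤ M / 4 + M := by
      intro k hk
      set n := 2 * k with hn
      have hne : ¬ Odd n := by simp [hn, Nat.not_odd_iff_even]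
      have hod : Odd (n + 1) := by
        rcases Nat.even_or_odd (n+1) with he | ho
        · exfalso; exact hne (Nat.Even.sub_odd (by omega) he odd_one)
        · exact ho
      have hb1 : b (n + 1) = b n / 2 ^ (n + 3) := by
        rw [hb n (by omega), hh]; simp [hne]
      have hb2 : b (n + 2) = 2 ^ (n + 1) * b (n + 1) := by
        rw [hb (n + 1) (by omega), hh]; simp [hod]
      have ha1 : a (n + 1) = a n / 2 ^ (n + 3) + ε := by
        have : a (n + 1) = h n (a n) + ε := rfl
        rw [this, hh]; simp [hne]
      have ha2 : a (n + 2) = 2 ^ (n + 1) * a (n + 1) + ε := by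
        have : a (n + 2) = h (n + 1) (a (n + 1)) + ε := rfl
        rw [this, hh]; simp [hod]
      have hpow : (2 : ℂ) ^ (n + 3) = 2 ^ (n + 1) * 4 := by
        rw [pow_succ, pow_succ]; ring
      have hne0 : (2 : ℂ) ^ (n + 1) ≠ 0 := pow_ne_zero _ two_ne_zero
      have hD : b (n + 2) - a (n + 2)
          = (b n - a n) / 4 - ((2 : ℂ) ^ (n + 1) + 1) * ε := by
        rw [hb2, ha2, hb1, ha1, hpow]
        field_simp
        ring
      have hc : ((2 : ℂ) ^ (n + 1) + 1) * ε
          = (b n - a n) / 4 - (b (n + 2) - a (n + 2)) := by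
        rw [hD]; ring
      have habs : ‖((2 : ℂ) ^ (n + 1) + 1) * ε‖
          ≤ M / 4 + M := by
        rw [hc]
        calc ‖(b n - a n) / 4 - (b (n + 2) - a (n + 2))‖
            ≤ ‖(b n - a n) / 4‖
              + ‖b (n + 2) - a (n + 2)‖ :=
              norm_sub_le _ _
          _ ≤ M / 4 + M := by
              rw [norm_div]
              simp only [Complex.norm_ofNat]
              gcongr
              · exact hM' n
              · exact hM' (n + 2)
      have hcast : ‖((2 : ℂ) ^ (n + 1) + 1) * ε‖
          = ((2 : ℝ) ^ (n + 1) + 1) * ε := by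
        have : ((2 : ℂ) ^ (n + 1) + 1) * (ε : ℂ)
            = ((((2 : ℝ) ^ (n + 1) + 1) * ε : ℝ) : ℂ) := by
          push_cast; ring
        rw [this, Complex.norm_real, Real.norm_eq_abs, abs_of_pos]
        positivity
      rw [hcast] at habs
      simpa [hn] using habs
    -- contradiction: LHS is unbounded in k
    obtain ⟨m, hm⟩ := pow_unbounded_of_one_lt ((M / 4 + M) / ε) (by norm_num : (1:ℝ) < 2)
    have hk := key (m + 1) (by omega)
    have h2 : (2 : ℝ) ^ m ≤ (2 : ℝ) ^ (2 * (m + 1) + 1) :=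
      pow_le_pow_right₀ (by norm_num) (by omega)
    have : (M / 4 + M) / ε < (2 : ℝ) ^ (2 * (m + 1) + 1) + 1 := by linarith
    have : M / 4 + M < ((2 : ℝ) ^ (2 * (m + 1) + 1) + 1) * ε := by
      rwa [div_lt_iff₀ hε] at this
    linarith
end

section
/- Define f : ℕ → ℝ → ℝ by f n x = 3x + (1/n)·sin(x/n). Then for all n ≥ 1 and all u ≠ v, the difference quotient satisfies (f n u - f n v)/(u - v) ≥ 3 - 1/n², and the difference equation b_{n+1} = f n b_n on ℝ has Hyers-Ulam stability. -/
lemma sinLip17 (x y : ℝ) : |Real.sin x - Real.sin y| ≤ |x - y| := by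
  rw [Real.sin_sub_sin]
  have h1 : |Real.sin ((x - y) / 2)| ≤ |(x - y) / 2| := Real.abs_sin_le_abs
  have h2 : |Real.cos ((x + y) / 2)| ≤ 1 := Real.abs_cos_le_one _
  have h3 : |(x - y) / 2| = |x - y| / 2 := by rw [abs_div]; norm_num
  rw [abs_mul, abs_mul, abs_two]
  nlinarith [abs_nonneg (Real.sin ((x - y) / 2)), abs_nonneg (Real.cos ((x + y) / 2)),
    abs_nonneg (x - y)]

noncomputable def Phi17 (f : ℕ → ℝ → ℝ) : ℕ → ℝ → ℝ
  | 0 => id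
  | 1 => id
  | n + 2 => f (n + 1) ∘ Phi17 f (n + 1)

lemma Phi17_succ (f : ℕ → ℝ → ℝ) (n : ℕ) :
    Phi17 f (n + 2) = f (n + 1) ∘ Phi17 f (n + 1) := rfl

lemma expand17 (f : ℕ → ℝ → ℝ)
    (hf : ∀ n x, f n x = 3 * x + (1 / n) * Real.sin (x / n)) :
    ∀ n : ℕ, 1 ≤ n → ∀ u v : ℝ, u ≤ v →
      (3 - 1 / (n : ℝ) ^ 2) * (v - u) ≤ f n v - f n u := by
  intro n hn u v huv
  have hn1 : (1 : ℝ) ≤ (n : ℝ) := by exact_mod_cast hn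
  have hn0 : (0 : ℝ) < (n : ℝ) := by linarith
  have hsin : |Real.sin (v / n) - Real.sin (u / n)| ≤ |v / n - u / n| :=
    sinLip17 _ _
  have habs : |v / n - u / n| = (v - u) / n := by
    rw [div_sub_div_same, abs_of_nonneg (div_nonneg (by linarith) hn0.le)]
  rw [habs] at hsin
  rw [hf, hf]
  have h1 := (abs_le.mp hsin).1
  have h2 := (abs_le.mp hsin).2
  have hinv : (0 : ℝ) < 1 / (n : ℝ) := by positivity
  have key : (1 / (n : ℝ)) * (Real.sin (v / n) - Real.sin (u / n)) ≥
      -((v - u) / n ^ 2) := by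
    have h3 := mul_le_mul_of_nonneg_left h1 (le_of_lt hinv)
    have heq : (1 / (n : ℝ)) * (-((v - u) / n)) = -((v - u) / n ^ 2) := by ring
    linarith [heq ▸ h3]
  have hsq : (0 : ℝ) < (n : ℝ) ^ 2 := by positivity
  have expand : 3 * v + (1 / n) * Real.sin (v / n) - (3 * u + (1 / n) * Real.sin (u / n))
      = 3 * (v - u) + (1 / n) * (Real.sin (v / n) - Real.sin (u / n)) := by ring
  rw [expand]
  have : (3 - 1 / (n : ℝ) ^ 2) * (v - u) = 3 * (v - u) - (v - u) / n ^ 2 := by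
    ring
  linarith [key]

lemma two_le17 (n : ℕ) (hn : 1 ≤ n) : (2 : ℝ) ≤ 3 - 1 / (n : ℝ) ^ 2 := by
  have hn1 : (1 : ℝ) ≤ (n : ℝ) := by exact_mod_cast hn
  have h1 : (1 : ℝ) ≤ (n : ℝ) ^ 2 := by nlinarith
  have : 1 / (n : ℝ) ^ 2 ≤ 1 := by
    rw [div_le_one (by positivity)]; exact h1
  linarith

lemma expand2_17 (f : ℕ → ℝ → ℝ)
    (hf : ∀ n x, f n x = 3 * x + (1 / n) * Real.sin (x / n)) :
    ∀ n : ℕ, 1 ≤ n → ∀ u v : ℝ, u ≤ v → 2 * (v - u) ≤ f n v - f n u := by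
  intro n hn u v huv
  have := expand17 f hf n hn u v huv
  nlinarith [two_le17 n hn]

lemma fmono17 (f : ℕ → ℝ → ℝ)
    (hf : ∀ n x, f n x = 3 * x + (1 / n) * Real.sin (x / n)) (n : ℕ) (hn : 1 ≤ n) :
    StrictMono (f n) := by
  intro u v huv
  have := expand2_17 f hf n hn u v (le_of_lt huv)
  linarith

lemma fcont17 (f : ℕ → ℝ → ℝ)
    (hf : ∀ n x, f n x = 3 * x + (1 / n) * Real.sin (x / n)) (n : ℕ) :
    Continuous (f n) := by
  have : f n = fun x => 3 * x + (1 / n) * Real.sin (x / n) := funext (hf n)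
  rw [this]; fun_prop

lemma Phi17_cont (f : ℕ → ℝ → ℝ) (hc : ∀ n, Continuous (f n)) :
    ∀ n : ℕ, Continuous (Phi17 f (n + 1)) := by
  intro n
  induction n with
  | zero => exact continuous_id
  | succ k ih => rw [Phi17_succ]; exact (hc (k + 1)).comp ih

lemma Phi17_mono (f : ℕ → ℝ → ℝ) (hm : ∀ n, 1 ≤ n → StrictMono (f n)) :
    ∀ n : ℕ, StrictMono (Phi17 f (n + 1)) := by
  intro n
  induction n with
  | zero => exact strictMono_id
  | succ k ih => rw [Phi17_succ]; exact (hm (k + 1) (Nat.succ_le_succ (Nat.zero_le k))).comp ih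

theorem stmt_17 (f : ℕ → ℝ → ℝ)
    (hf : ∀ n x, f n x = 3 * x + (1 / n) * Real.sin (x / n)) :
    (∀ n : ℕ, 1 ≤ n → ∀ u v : ℝ, u ≠ v →
        3 - 1 / (n : ℝ) ^ 2 ≤ (f n u - f n v) / (u - v)) ∧
      ∃ C > (0 : ℝ), ∃ ε₀ > (0 : ℝ), ∀ ε : ℝ, 0 < ε → ε ≤ ε₀ →
        ∀ a : ℕ → ℝ, (∀ n ≥ 1, |a (n + 1) - f n (a n)| ≤ ε) →
          ∃ b : ℕ → ℝ, (∀ n ≥ 1, b (n + 1) = f n (b n)) ∧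
            ∀ n ≥ 1, |b n - a n| ≤ C * ε := by
  constructor
  · -- difference quotient bound
    intro n hn u v huv
    rcases lt_or_gt_of_ne huv with h | h
    · -- u < v
      have hexp := expand17 f hf n hn u v (le_of_lt h)
      have hq : (f n u - f n v) / (u - v) = (f n v - f n u) / (v - u) := by
        rw [← neg_sub (f n v), ← neg_sub v u, neg_div_neg_eq]
      rw [hq, le_div_iff₀ (by linarith)]
      linarith
    · have hexp := expand17 f hf n hn v u (le_of_lt h)
      rw [le_div_iff₀ (by linarith : (0:ℝ) < u - v)]
      linarith
  · refine ⟨2, two_pos, 1, one_pos, ?_⟩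
    intro ε hε _ a ha
    -- shadowing construction
    set Φ := Phi17 f with hΦ
    have hcont : ∀ n : ℕ, Continuous (Φ (n + 1)) :=
      Phi17_cont f (fcont17 f hf)
    have hmono : ∀ n : ℕ, StrictMono (Φ (n + 1)) :=
      Phi17_mono f (fmono17 f hf)
    -- T m : set of initial values x whose orbit stays 2ε-close to a up to time m+1
    set T : ℕ → Set ℝ := fun m => ⋂ k ∈ Set.Iic m, {x | |Φ (k + 1) x - a (k + 1)| ≤ 2 * ε}
      with hT
    have hTmem : ∀ m x, x ∈ T m ↔ ∀ k ≤ m, |Φ (k + 1) x - a (k + 1)| ≤ 2 * ε := by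
      intro m x; simp [hT]
    have key : ∀ m : ℕ, ∃ p q : ℝ, p ≤ q ∧
        (∀ x ∈ Set.Icc p q, x ∈ T m) ∧
        Φ (m + 1) p = a (m + 1) - 2 * ε ∧ Φ (m + 1) q = a (m + 1) + 2 * ε := by
      intro m
      induction m with
      | zero =>
        refine ⟨a 1 - 2 * ε, a 1 + 2 * ε, by linarith, ?_, rfl, rfl⟩
        intro x hx
        rw [hTmem]
        intro k hk
        interval_cases k
        have : Φ 1 x = x := rfl
        rw [this, abs_le]
        exact ⟨by linarith [hx.1], by linarith [hx.2]⟩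
      | succ m ih =>
        obtain ⟨p, q, hpq, hall, hp, hq⟩ := ih
        have hstep : ∀ x, Φ (m + 2) x = f (m + 1) (Φ (m + 1) x) := fun x => rfl
        have haeq : |a (m + 2) - f (m + 1) (a (m + 1))| ≤ ε :=
          ha (m + 1) (Nat.le_add_left 1 m)
        have hexp1 : 2 * (2 * ε) ≤ f (m + 1) (a (m + 1)) - f (m + 1) (a (m + 1) - 2 * ε) := by
          have := expand2_17 f hf (m + 1) (Nat.le_add_left 1 m)
            (a (m + 1) - 2 * ε) (a (m + 1)) (by linarith)
          linarith
        have hexp2 : 2 * (2 * ε) ≤ f (m + 1) (a (m + 1) + 2 * ε) - f (m + 1) (a (m + 1)) := by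
          have := expand2_17 f hf (m + 1) (Nat.le_add_left 1 m)
            (a (m + 1)) (a (m + 1) + 2 * ε) (by linarith)
          linarith
        have hgp : Φ (m + 2) p ≤ a (m + 2) - 2 * ε := by
          rw [hstep, hp]
          have h1 := (abs_le.mp haeq).1
          linarith
        have hgq : a (m + 2) + 2 * ε ≤ Φ (m + 2) q := by
          rw [hstep, hq]
          have h2 := (abs_le.mp haeq).2
          linarith
        -- IVT
        have hcg : ContinuousOn (Φ (m + 2)) (Set.Icc p q) := (hcont (m + 1)).continuousOn
        have hiv := intermediate_value_Icc hpq hcg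
        have hmem1 : a (m + 2) - 2 * ε ∈ Set.Icc (Φ (m + 2) p) (Φ (m + 2) q) :=
          ⟨hgp, by linarith⟩
        have hmem2 : a (m + 2) + 2 * ε ∈ Set.Icc (Φ (m + 2) p) (Φ (m + 2) q) :=
          ⟨by linarith, hgq⟩
        obtain ⟨p', hp'mem, hp'⟩ := hiv hmem1
        obtain ⟨q', hq'mem, hq'⟩ := hiv hmem2
        have hp'q' : p' ≤ q' := by
          by_contra hcon
          push_neg at hcon
          have := hmono (m + 1) hcon
          rw [hp', hq'] at this
          linarith
        refine ⟨p', q', hp'q', ?_, hp', hq'⟩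
        intro x hx
        have hxpq : x ∈ Set.Icc p q :=
          ⟨le_trans hp'mem.1 hx.1, le_trans hx.2 hq'mem.2⟩
        rw [hTmem]
        intro k hk
        rcases Nat.lt_or_ge k (m + 1) with hk' | hk'
        · exact (hTmem m x).mp (hall x hxpq) k (Nat.lt_succ_iff.mp hk')
        · have hkeq : k = m + 1 := le_antisymm hk hk'
          subst hkeq
          have hmo := hmono (m + 1)
          have h1 : Φ (m + 2) p' ≤ Φ (m + 2) x := hmo.monotone hx.1
          have h2 : Φ (m + 2) x ≤ Φ (m + 2) q' := hmo.monotone hx.2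
          rw [hp'] at h1; rw [hq'] at h2
          rw [abs_le]
          exact ⟨by linarith, by linarith⟩
    -- nested compact intersection
    have hTsub : ∀ m, T (m + 1) ⊆ T m := by
      intro m x hx
      rw [hTmem] at hx ⊢
      exact fun k hk => hx k (le_trans hk (Nat.le_succ m))
    have hTne : ∀ m, (T m).Nonempty := by
      intro m
      obtain ⟨p, q, hpq, hall, -, -⟩ := key m
      exact ⟨p, hall p ⟨le_refl p, hpq⟩⟩
    have hTcl : ∀ m, IsClosed (T m) := by
      intro m
      apply isClosed_biInter
      intro k _
      have : {x : ℝ | |Φ (k + 1) x - a (k + 1)| ≤ 2 * ε}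
          = (fun x => |Φ (k + 1) x - a (k + 1)|) ⁻¹' Set.Iic (2 * ε) := rfl
      rw [this]
      exact isClosed_Iic.preimage (((hcont k).sub continuous_const).abs)
    have hTc : IsCompact (T 0) := by
      have : T 0 = Set.Icc (a 1 - 2 * ε) (a 1 + 2 * ε) := by
        ext x
        rw [hTmem]
        constructor
        · intro h
          have := h 0 (le_refl 0)
          have hid : Φ 1 x = x := rfl
          rw [hid, abs_le] at this
          exact ⟨by linarith [this.1], by linarith [this.2]⟩
        · intro hx k hk
          interval_cases k
          have hid : Φ 1 x = x := rfl
          rw [hid, abs_le]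
          exact ⟨by linarith [hx.1], by linarith [hx.2]⟩
      rw [this]; exact isCompact_Icc
    obtain ⟨x, hx⟩ := IsCompact.nonempty_iInter_of_sequence_nonempty_isCompact_isClosed
      T hTsub hTne hTc hTcl
    simp only [Set.mem_iInter] at hx
    refine ⟨fun n => Φ n x, ?_, ?_⟩
    · intro n hn
      obtain ⟨k, rfl⟩ := Nat.exists_eq_add_of_le' hn
      exact rfl
    · intro n hn
      obtain ⟨k, rfl⟩ := Nat.exists_eq_add_of_le' hn
      have := (hTmem k x).mp (hx k) k (le_refl k)
      simpa using this
end
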